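/- Every compact convex body K ⊆ ℝ² with nonempty interior admits a chord [x₁, x₂] parallel to a direction ω of minimal breadth such that ⟨ω, x₁ − x₂⟩ = |x₁ − x₂| = width(K), and K is contained in the slab between the two hyperplanes orthogonal to ω through x₁ and x₂; equivalently, the section [x₁,x₂] is the orthogonal projection (shadow) of K in the direction ω^⊥. -/
import Mathlib


open scoped RealInnerProductSpace

/-- The support function `H_K(ω) = sup {⟨x, ω⟩ : x ∈ K}`. -/
noncomputable def suppFn (K : Set (EuclideanSpace ℝ (Fin 2)))
    (ω : EuclideanSpace ℝ (Fin 2)) : ℝ :=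
  sSup ((fun x => ⟪x, ω⟫) '' K)

/-- The breadth `B_K(ω) = H_K(ω) + H_K(-ω)`. -/
noncomputable def breadthFn (K : Set (EuclideanSpace ℝ (Fin 2)))
    (ω : EuclideanSpace ℝ (Fin 2)) : ℝ :=
  suppFn K ω + suppFn K (-ω)

/-- The width of `K`: the infimum of the breadth over unit directions. -/
noncomputable def widthFn (K : Set (EuclideanSpace ℝ (Fin 2))) : ℝ :=
  sInf (breadthFn K '' Metric.sphere (0 : EuclideanSpace ℝ (Fin 2)) 1)

open scoped Pointwise

section Aux

variable {K : Set (EuclideanSpace ℝ (Fin 2))}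

/-- For compact nonempty `K`, the support function value is attained. -/
lemma suppFn_attained (hK : IsCompact K) (hne : K.Nonempty)
    (ω : EuclideanSpace ℝ (Fin 2)) : ∃ x ∈ K, ⟪x, ω⟫ = suppFn K ω := by
  have hcont : Continuous fun x : EuclideanSpace ℝ (Fin 2) => ⟪x, ω⟫ :=
    continuous_id.inner continuous_const
  obtain ⟨x, hxK, hmax⟩ := hK.exists_isMaxOn hne hcont.continuousOn
  refine ⟨x, hxK, le_antisymm ?_ ?_⟩
  · exact le_csSup ((hK.image hcont).bddAbove) ⟨x, hxK, rfl⟩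
  · exact csSup_le (hne.image _) (by rintro _ ⟨y, hy, rfl⟩; exact hmax hy)

lemma le_suppFn (hK : IsCompact K) {x : EuclideanSpace ℝ (Fin 2)} (hx : x ∈ K)
    (ω : EuclideanSpace ℝ (Fin 2)) : ⟪x, ω⟫ ≤ suppFn K ω := by
  have hcont : Continuous fun x : EuclideanSpace ℝ (Fin 2) => ⟪x, ω⟫ :=
    continuous_id.inner continuous_const
  exact le_csSup ((hK.image hcont).bddAbove) ⟨x, hx, rfl⟩

lemma breadthFn_nonneg (hK : IsCompact K) (hne : K.Nonempty)
    (ω : EuclideanSpace ℝ (Fin 2)) : 0 ≤ breadthFn K ω := by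
  obtain ⟨x, hx⟩ := hne
  have h1 := le_suppFn hK hx ω
  have h2 := le_suppFn hK hx (-ω)
  have : ⟪x, ω⟫ + ⟪x, -ω⟫ = 0 := by rw [inner_neg_right]; ring
  unfold breadthFn; linarith

lemma breadthFn_continuous (hK : IsCompact K) (hne : K.Nonempty) :
    Continuous (breadthFn K) := by
  obtain ⟨R, hR⟩ := hK.isBounded.exists_norm_le
  have hsupp : ∀ ω₁ ω₂ : EuclideanSpace ℝ (Fin 2),
      suppFn K ω₁ ≤ suppFn K ω₂ + R * ‖ω₁ - ω₂‖ := by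
    intro ω₁ ω₂
    obtain ⟨x, hxK, hx⟩ := suppFn_attained hK hne ω₁
    have h1 : ⟪x, ω₁⟫ = ⟪x, ω₂⟫ + ⟪x, ω₁ - ω₂⟫ := by
      rw [inner_sub_right]; ring
    have h2 : ⟪x, ω₁ - ω₂⟫ ≤ ‖x‖ * ‖ω₁ - ω₂‖ := real_inner_le_norm x _
    have h3 : ‖x‖ * ‖ω₁ - ω₂‖ ≤ R * ‖ω₁ - ω₂‖ :=
      mul_le_mul_of_nonneg_right (hR x hxK) (norm_nonneg _)
    have h4 := le_suppFn hK hxK ω₂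
    linarith [hx ▸ h1]
  have hlip : LipschitzWith (Real.toNNReal R) (suppFn K) := by
    refine LipschitzWith.of_dist_le_mul fun ω₁ ω₂ => ?_
    have hR0 : 0 ≤ R := le_trans (norm_nonneg _) (hR _ hne.choose_spec)
    rw [Real.dist_eq, Real.coe_toNNReal R hR0, dist_eq_norm]
    have hA := hsupp ω₁ ω₂
    have hB := hsupp ω₂ ω₁
    rw [abs_le]
    constructor
    · have : ‖ω₂ - ω₁‖ = ‖ω₁ - ω₂‖ := norm_sub_rev _ _
      linarith [this ▸ hB]
    · linarith
  exact hlip.continuous.add (hlip.continuous.comp continuous_neg)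

end Aux

/-- Every planar compact convex body admits a chord `[x₁, x₂]`, parallel to a direction
`ω` of minimal breadth, with `⟨ω, x₁ - x₂⟩ = |x₁ - x₂| = width(K)`, such that `K` lies
in the slab between the two lines orthogonal to `ω` through `x₁` and `x₂`
(equivalently, the section `[x₁,x₂]` is a shadow of `K` in direction `ω^⊥`). -/
theorem minimal_breadth_chord_shadow
    (K : Set (EuclideanSpace ℝ (Fin 2))) (hK : IsCompact K) (hconv : Convex ℝ K)
    (hint : (interior K).Nonempty) :
    ∃ ω : EuclideanSpace ℝ (Fin 2), ∃ x₁ ∈ K, ∃ x₂ ∈ K,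
      ‖ω‖ = 1 ∧ breadthFn K ω = widthFn K ∧
      (∃ t : ℝ, x₁ - x₂ = t • ω) ∧
      ⟪ω, x₁ - x₂⟫ = ‖x₁ - x₂‖ ∧ ‖x₁ - x₂‖ = widthFn K ∧
      ∀ x ∈ K, ⟪ω, x₂⟫ ≤ ⟪ω, x⟫ ∧ ⟪ω, x⟫ ≤ ⟪ω, x₁⟫ := by
  have hne : K.Nonempty := hint.mono interior_subset
  -- the sphere is compact and nonempty
  have hsphne : (Metric.sphere (0 : EuclideanSpace ℝ (Fin 2)) 1).Nonempty :=
    NormedSpace.sphere_nonempty.mpr zero_le_one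
  have hsphcpt : IsCompact (Metric.sphere (0 : EuclideanSpace ℝ (Fin 2)) 1) :=
    isCompact_sphere 0 1
  -- a direction of minimal breadth
  obtain ⟨ω, hωsph, hωmin⟩ := hsphcpt.exists_isMinOn hsphne
    (breadthFn_continuous hK hne).continuousOn
  have hωnorm : ‖ω‖ = 1 := by simpa using hωsph
  have hwidth : breadthFn K ω = widthFn K := by
    have hleast : IsLeast (breadthFn K '' Metric.sphere (0 : EuclideanSpace ℝ (Fin 2)) 1)
        (breadthFn K ω) := by
      refine ⟨⟨ω, hωsph, rfl⟩, ?_⟩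
      rintro _ ⟨u, hu, rfl⟩; exact hωmin hu
    exact hleast.csInf_eq.symm
  set w := widthFn K with hwdef
  have hw0 : 0 ≤ w := hwidth ▸ breadthFn_nonneg hK hne ω
  -- every unit direction has breadth at least w
  have hbdd : BddBelow (breadthFn K '' Metric.sphere (0 : EuclideanSpace ℝ (Fin 2)) 1) :=
    ⟨0, by rintro _ ⟨u, _, rfl⟩; exact breadthFn_nonneg hK hne u⟩
  have hwle : ∀ u : EuclideanSpace ℝ (Fin 2), ‖u‖ = 1 → w ≤ breadthFn K u := by
    intro u hu
    exact csInf_le hbdd ⟨u, by simpa using hu, rfl⟩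
  -- the difference body
  have hDconv : Convex ℝ (K - K) := hconv.sub hconv
  have hDcpt : IsCompact (K - K) := by
    rw [sub_eq_add_neg]
    exact hK.add hK.neg
  -- key claim : w • ω ∈ K - K
  have hmem : w • ω ∈ K - K := by
    by_contra hnot
    obtain ⟨f, c, hfD, hfx⟩ :=
      geometric_hahn_banach_closed_point hDconv hDcpt.isClosed hnot
    set v := (InnerProductSpace.toDual ℝ (EuclideanSpace ℝ (Fin 2))).symm f with hv
    have hvapp : ∀ x, ⟪v, x⟫ = f x := fun x => InnerProductSpace.toDual_symm_apply
    have hvne : v ≠ 0 := by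
      intro h0
      obtain ⟨x, hx⟩ := hne
      have hxx : (x - x : EuclideanSpace ℝ (Fin 2)) ∈ K - K := Set.sub_mem_sub hx hx
      have h1 := hfD _ hxx
      have h2 : f (x - x) = 0 := by
        rw [← hvapp, h0]; simp
      have h3 : f (w • ω) = 0 := by rw [← hvapp, h0]; simp
      linarith
    set u := ‖v‖⁻¹ • v with hu
    have hunorm : ‖u‖ = 1 := by
      rw [hu, norm_smul, norm_inv, norm_norm]
      field_simp [norm_ne_zero_iff.mpr hvne]
    -- breadth in direction u is attained by a point of K - K
    obtain ⟨a, haK, ha⟩ := suppFn_attained hK hne u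
    obtain ⟨b, hbK, hb⟩ := suppFn_attained hK hne (-u)
    have habD : a - b ∈ K - K := Set.sub_mem_sub haK hbK
    have hab : ⟪a - b, u⟫ = breadthFn K u := by
      rw [inner_sub_left, breadthFn, ← ha, ← hb, inner_neg_right]
      ring
    -- ⟪w • ω, u⟫ ≤ w
    have hsmall : ⟪w • ω, u⟫ ≤ w := by
      calc ⟪w • ω, u⟫ ≤ ‖w • ω‖ * ‖u‖ := real_inner_le_norm _ _
        _ = w := by rw [hunorm, norm_smul, hωnorm]; simp [abs_of_nonneg hw0]
    -- but f separates, contradiction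
    have hvpos : (0:ℝ) < ‖v‖⁻¹ := inv_pos.mpr (norm_pos_iff.mpr hvne)
    have h1 : ⟪a - b, u⟫ < ⟪w • ω, u⟫ := by
      have hlt : f (a - b) < f (w • ω) := lt_trans (hfD _ habD) hfx
      have e1 : ⟪a - b, u⟫ = ‖v‖⁻¹ * f (a - b) := by
        rw [hu, real_inner_smul_right, real_inner_comm, hvapp]
      have e2 : ⟪w • ω, u⟫ = ‖v‖⁻¹ * f (w • ω) := by
        rw [hu, real_inner_smul_right, real_inner_comm, hvapp]
      rw [e1, e2]
      exact (mul_lt_mul_iff_right₀ hvpos).mpr hlt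
    have h2 := hwle u hunorm
    rw [hab] at h1
    linarith
  -- extract the chord
  obtain ⟨x₁, hx₁, x₂, hx₂, hx12⟩ := Set.mem_sub.mp hmem
  refine ⟨ω, x₁, hx₁, x₂, hx₂, hωnorm, hwidth, ⟨w, hx12⟩, ?_, ?_, ?_⟩
  · rw [hx12, real_inner_smul_right, real_inner_self_eq_norm_sq, hωnorm,
      norm_smul, hωnorm]
    simp [abs_of_nonneg hw0]
  · rw [hx12, norm_smul, hωnorm]
    simp [abs_of_nonneg hw0]
  · -- slab condition
    have hinner : ⟪ω, x₁⟫ - ⟪ω, x₂⟫ = w := by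
      have : ⟪ω, x₁ - x₂⟫ = w := by
        rw [hx12, real_inner_smul_right, real_inner_self_eq_norm_sq, hωnorm]; ring
      rw [← this, inner_sub_right]
    have hs1 : ⟪x₁, ω⟫ ≤ suppFn K ω := le_suppFn hK hx₁ ω
    have hs2 : ⟪x₂, -ω⟫ ≤ suppFn K (-ω) := le_suppFn hK hx₂ (-ω)
    have hbr : suppFn K ω + suppFn K (-ω) = w := hwidth
    have hc1 : ⟪x₁, ω⟫ = suppFn K ω := by
      have e : ⟪x₂, -ω⟫ = -⟪ω, x₂⟫ := by rw [inner_neg_right, real_inner_comm]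
      have e2 : ⟪x₁, ω⟫ = ⟪ω, x₁⟫ := real_inner_comm _ _
      rw [e] at hs2; rw [e2] at hs1 ⊢
      linarith
    have hc2 : ⟪x₂, -ω⟫ = suppFn K (-ω) := by
      have e2 : ⟪x₁, ω⟫ = ⟪ω, x₁⟫ := real_inner_comm _ _
      have e : ⟪x₂, -ω⟫ = -⟪ω, x₂⟫ := by rw [inner_neg_right, real_inner_comm]
      rw [e2] at hs1; rw [e] at hs2 ⊢
      linarith
    intro x hx
    constructor
    · have h := le_suppFn hK hx (-ω)
      rw [← hc2] at h
      have e1 : ⟪x, -ω⟫ = -⟪ω, x⟫ := by rw [inner_neg_right, real_inner_comm]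
      have e2 : ⟪x₂, -ω⟫ = -⟪ω, x₂⟫ := by rw [inner_neg_right, real_inner_comm]
      rw [e1, e2] at h
      linarith
    · have h := le_suppFn hK hx ω
      rw [← hc1] at h
      calc ⟪ω, x⟫ = ⟪x, ω⟫ := real_inner_comm _ _
        _ ≤ ⟪x₁, ω⟫ := h
        _ = ⟪ω, x₁⟫ := real_inner_comm _ _
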